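/- Assume q = p (i.e. n = 1), and let χ : H → kˣ be a character with χ ≠ χ^s. Then the kernel of T_{n_s} : Ind_B^Γ χ^s → Ind_B^Γ χ equals the image of T_{n_s} : Ind_B^Γ χ → Ind_B^Γ χ^s; that is, there is a short exact sequence of k[Γ]-modules 0 → Im(T_{n_s} : Ind_B^Γ χ → Ind_B^Γ χ^s) → Ind_B^Γ χ^s → Im(T_{n_s} : Ind_B^Γ χ^s → Ind_B^Γ χ) → 0, in which the first map is the inclusion and the second is T_{n_s}. -/

import Mathlib

open Matrix

noncomputable section

abbrev GL2 (F : Type) [Field F] := Matrix.GeneralLinearGroup (Fin 2) F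

variable (F : Type) [Field F] [Fintype F] (k : Type) [Field k]

/-- The unipotent upper-triangular matrix `[[1, c], [0, 1]]`. -/
def uElt (c : F) : GL2 F :=
  Matrix.GeneralLinearGroup.mkOfDetNeZero !![1, c; 0, 1] (by simp [Matrix.det_fin_two_of])

/-- The upper-triangular matrix `[[a, c], [0, d]]`. -/
def bElt (a d : Fˣ) (c : F) : GL2 F :=
  Matrix.GeneralLinearGroup.mkOfDetNeZero !![(a : F), c; 0, (d : F)]
    (by simp [Matrix.det_fin_two_of])

/-- The diagonal matrix `[[a, 0], [0, d]]`. -/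
def hElt (a d : Fˣ) : GL2 F := bElt F a d 0

/-- The matrix `n_s = [[0, -1], [1, 0]]`. -/
def nsElt : GL2 F :=
  Matrix.GeneralLinearGroup.mkOfDetNeZero !![0, -1; 1, 0] (by norm_num [Matrix.det_fin_two_of])

/-- The right-translation representation of `GL₂(F)` on the space of `k`-valued functions. -/
def rt : Representation k (GL2 F) (GL2 F → k) where
  toFun g :=
    { toFun := fun f x => f (x * g)
      map_add' := fun _ _ => rfl
      map_smul' := fun _ _ => rfl }
  map_one' := by ext f x; simp
  map_mul' g g' := by ext f x; simp [mul_assoc]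

/-- `χ^s`, the character obtained from `χ` by swapping the two diagonal entries. -/
def swapChar (χ : (Fˣ × Fˣ) →* kˣ) : (Fˣ × Fˣ) →* kˣ where
  toFun x := χ (x.2, x.1)
  map_one' := χ.map_one
  map_mul' x y := by rw [← _root_.map_mul]; rfl

/-- The induced representation `Ind_B^Γ χ` as a subspace of the space of functions `Γ → k`:
functions satisfying `f (b * g) = χ (b) * f g` for all upper-triangular `b`. -/
def Ind (χ : (Fˣ × Fˣ) →* kˣ) : Submodule k (GL2 F → k) where
  carrier := {f | ∀ (a d : Fˣ) (c : F) (g : GL2 F), f (bElt F a d c * g) = (χ (a, d) : k) * f g}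
  add_mem' := by
    intro f1 f2 h1 h2 a d c g
    simp only [Pi.add_apply, h1 a d c g, h2 a d c g]
    ring
  zero_mem' := by intro a d c g; simp
  smul_mem' := by
    intro t f hf a d c g
    simp only [Pi.smul_apply, smul_eq_mul, hf a d c g]
    ring

/-- The Hecke operator `T_{n_s}`, `(T f) x = ∑_{c ∈ F} f (n_s⁻¹ * u_c * x)`. -/
def heckeT : (GL2 F → k) →ₗ[k] (GL2 F → k) where
  toFun f x := ∑ c : F, f ((nsElt F)⁻¹ * uElt F c * x)
  map_add' f g := by funext x; simp [Finset.sum_add_distrib]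
  map_smul' t f := by funext x; simp [Finset.mul_sum]

/-- The submodule of invariants of a representation under a set of group elements. -/
def invSubmodule {G V : Type*} [Group G] [AddCommGroup V] [Module k V]
    (ρ : Representation k G V) (S : Set G) : Submodule k V where
  carrier := {v | ∀ g ∈ S, ρ g v = v}
  add_mem' := by intro v w hv hw g hg; rw [map_add, hv g hg, hw g hg]
  zero_mem' := by intro g hg; rw [map_zero]
  smul_mem' := by intro c v hv g hg; rw [LinearMap.map_smul, hv g hg]



set_option linter.unusedSectionVars false
set_option linter.unreachableTactic false
set_option linter.unusedTactic false
set_option linter.unnecessarySeqFocus false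
set_option linter.unnecessarySimpa false
set_option maxHeartbeats 1000000

attribute [local instance] Classical.propDecidable

def wElt (μ : F) : GL2 F :=
  Matrix.GeneralLinearGroup.mkOfDetNeZero !![0, 1; -1, -μ] (by norm_num [Matrix.det_fin_two_of])

lemma coe_bElt (a d : Fˣ) (c : F) :
    ((bElt F a d c : GL2 F) : Matrix (Fin 2) (Fin 2) F) = !![(a : F), c; 0, (d : F)] := rfl

lemma coe_uElt (c : F) :
    ((uElt F c : GL2 F) : Matrix (Fin 2) (Fin 2) F) = !![1, c; 0, 1] := rfl

lemma coe_wElt (μ : F) :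
    ((wElt F μ : GL2 F) : Matrix (Fin 2) (Fin 2) F) = !![0, 1; -1, -μ] := rfl

lemma coe_nsElt :
    ((nsElt F : GL2 F) : Matrix (Fin 2) (Fin 2) F) = !![0, -1; 1, 0] := rfl

lemma K0 (μ : F) : (nsElt F)⁻¹ * uElt F μ = wElt F μ := by
  rw [inv_mul_eq_iff_eq_mul]
  apply Matrix.GeneralLinearGroup.ext
  intro i j
  rw [Units.val_mul, coe_nsElt, coe_wElt, coe_uElt]
  rw [Matrix.mul_fin_two]
  fin_cases i <;> fin_cases j <;> norm_num

lemma K1 (a d : Fˣ) (c lam : F) :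
    wElt F lam * bElt F a d c = bElt F d a 0 * wElt F ((c + lam * d) / a) := by
  apply Matrix.GeneralLinearGroup.ext
  intro i j
  rw [Units.val_mul, Units.val_mul, coe_bElt, coe_bElt, coe_wElt, coe_wElt]
  rw [Matrix.mul_fin_two, Matrix.mul_fin_two]
  have ha : (a : F) ≠ 0 := a.ne_zero
  fin_cases i <;> fin_cases j <;> simp only [Fin.zero_eta, Fin.mk_one, Matrix.of_apply, Matrix.cons_val', Matrix.cons_val_zero, Matrix.cons_val_one, Matrix.empty_val', Matrix.cons_val_fin_one] <;> field_simp <;> ring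

lemma K2 (μ : F) : wElt F 0 * wElt F μ = bElt F (-1) (-1) (-μ) := by
  apply Matrix.GeneralLinearGroup.ext
  intro i j
  rw [Units.val_mul, coe_wElt, coe_wElt, coe_bElt]
  rw [Matrix.mul_fin_two]
  fin_cases i <;> fin_cases j <;> norm_num

lemma K3 (lam μ : F) (h : lam ≠ 0) :
    wElt F lam * wElt F μ =
      bElt F (-(Units.mk0 lam h)⁻¹) (-(Units.mk0 lam h)) 1 * wElt F (μ - lam⁻¹) := by
  apply Matrix.GeneralLinearGroup.ext
  intro i j
  rw [Units.val_mul, Units.val_mul, coe_wElt, coe_wElt, coe_wElt, coe_bElt]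
  rw [Matrix.mul_fin_two, Matrix.mul_fin_two]
  fin_cases i <;> fin_cases j <;>
    simp only [Units.val_neg, Units.val_inv_eq_inv_val, Units.val_mk0] <;>
    simp only [Fin.zero_eta, Fin.mk_one, Matrix.of_apply, Matrix.cons_val', Matrix.cons_val_zero, Matrix.cons_val_one, Matrix.empty_val', Matrix.cons_val_fin_one] <;>
    field_simp <;> ring

lemma det_ne (g : GL2 F) : ((g : Matrix (Fin 2) (Fin 2) F)).det ≠ 0 := by
  have : IsUnit ((g : Matrix (Fin 2) (Fin 2) F)).det :=
    (Matrix.isUnit_iff_isUnit_det _).mp g.isUnit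
  exact this.ne_zero

lemma bruhat (g : GL2 F) :
    (∃ a d c, g = bElt F a d c) ∨ (∃ (a d : Fˣ) (c μ : F), g = bElt F a d c * wElt F μ) := by
  obtain ⟨G, hG⟩ : ∃ G : Matrix (Fin 2) (Fin 2) F, (g : Matrix (Fin 2) (Fin 2) F) = G := ⟨_, rfl⟩
  have hdet : G.det ≠ 0 := hG ▸ det_ne F g
  have hdet2 : G 0 0 * G 1 1 - G 0 1 * G 1 0 = G.det := (Matrix.det_fin_two G).symm
  by_cases h10 : G 1 0 = 0
  · left
    have h00 : G 0 0 ≠ 0 := by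
      intro h; apply hdet; rw [← hdet2, h, h10]; ring
    have h11 : G 1 1 ≠ 0 := by
      intro h; apply hdet; rw [← hdet2, h, h10]; ring
    refine ⟨Units.mk0 _ h00, Units.mk0 _ h11, G 0 1, ?_⟩
    apply Matrix.GeneralLinearGroup.ext
    intro i j
    rw [coe_bElt, hG]
    fin_cases i <;> fin_cases j <;> simp [h10]
  · right
    refine ⟨Units.mk0 (-G.det / G 1 0) (div_ne_zero (neg_ne_zero.mpr hdet) h10),
      Units.mk0 (-(G 1 0)) (by simpa using h10),
      -(G 0 0), G 1 1 / G 1 0, ?_⟩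
    apply Matrix.GeneralLinearGroup.ext
    intro i j
    rw [Units.val_mul, coe_bElt, coe_wElt, Matrix.mul_fin_two, hG]
    fin_cases i <;> fin_cases j
    · show G 0 0 = _; simp only [Fin.zero_eta, Fin.mk_one, Matrix.of_apply, Matrix.cons_val', Matrix.cons_val_zero, Matrix.cons_val_one, Matrix.empty_val', Matrix.cons_val_fin_one, Units.val_mk0]; field_simp; ring
    · show G 0 1 = _; simp only [Fin.zero_eta, Fin.mk_one, Matrix.of_apply, Matrix.cons_val', Matrix.cons_val_zero, Matrix.cons_val_one, Matrix.empty_val', Matrix.cons_val_fin_one, Units.val_mk0]; field_simp; linear_combination -hdet2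
    · show G 1 0 = _; simp only [Fin.zero_eta, Fin.mk_one, Matrix.of_apply, Matrix.cons_val', Matrix.cons_val_zero, Matrix.cons_val_one, Matrix.empty_val', Matrix.cons_val_fin_one, Units.val_mk0]; field_simp; ring
    · show G 1 1 = _; simp only [Fin.zero_eta, Fin.mk_one, Matrix.of_apply, Matrix.cons_val', Matrix.cons_val_zero, Matrix.cons_val_one, Matrix.empty_val', Matrix.cons_val_fin_one, Units.val_mk0]; field_simp; ring

attribute [local instance] Classical.propDecidable


lemma swapChar_apply (χ : (Fˣ × Fˣ) →* kˣ) (a d : Fˣ) : swapChar F k χ (a, d) = χ (d, a) := rfl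

lemma swapChar_swapChar (χ : (Fˣ × Fˣ) →* kˣ) : swapChar F k (swapChar F k χ) = χ :=
  MonoidHom.ext fun _ => rfl

/-- the character `x ↦ χ (x, x⁻¹)` of `Fˣ`. -/
def etaHom (χ : (Fˣ × Fˣ) →* kˣ) : Fˣ →* kˣ :=
  χ.comp ((MonoidHom.id Fˣ).prod invMonoidHom)

lemma etaHom_apply (χ : (Fˣ × Fˣ) →* kˣ) (x : Fˣ) : etaHom F k χ x = χ (x, x⁻¹) := rfl

lemma etaHom_ne_one (χ : (Fˣ × Fˣ) →* kˣ) (hχ : χ ≠ swapChar F k χ) : etaHom F k χ ≠ 1 := by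
  intro h
  apply hχ
  apply MonoidHom.ext
  rintro ⟨a, d⟩
  have hx : etaHom F k χ (d⁻¹ * a) = 1 := by rw [h]; rfl
  rw [etaHom_apply] at hx
  have : (a, d) = (d, a) * (d⁻¹ * a, (d⁻¹ * a)⁻¹) := by
    rw [Prod.mk_mul_mk, Prod.ext_iff]
    constructor <;> simp <;> group
  rw [swapChar_apply, this, _root_.map_mul, hx, mul_one]

lemma sum_etaHom (χ : (Fˣ × Fˣ) →* kˣ) (hχ : χ ≠ swapChar F k χ) :
    ∑ x : Fˣ, ((etaHom F k χ x : kˣ) : k) = 0 := by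
  have h := sum_hom_units_eq_zero ((Units.coeHom k).comp (etaHom F k χ)) ?_
  · simpa using h
  · intro hc
    apply etaHom_ne_one F k χ hχ
    apply MonoidHom.ext
    intro x
    have : ((Units.coeHom k).comp (etaHom F k χ)) x = 1 := by rw [hc]; rfl
    exact Units.ext this

/-- convolution kernel of the Hecke operator in coordinates -/
def cc (χ : (Fˣ × Fˣ) →* kˣ) : F → k := fun t =>
  if h : t = 0 then 0 else (χ (-(Units.mk0 t h), -(Units.mk0 t h)⁻¹) : k)

lemma cc_zero (χ : (Fˣ × Fˣ) →* kˣ) : cc F k χ 0 = 0 := by simp [cc]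

lemma cc_units (χ : (Fˣ × Fˣ) →* kˣ) (x : Fˣ) :
    cc F k χ (x : F) = (χ (-x, -x⁻¹) : k) := by
  have hmk : Units.mk0 (x : F) x.ne_zero = x := Units.ext rfl
  rw [cc, dif_neg x.ne_zero, hmk]

lemma cc_factor (χ : (Fˣ × Fˣ) →* kˣ) (x : Fˣ) :
    cc F k χ (x : F) = (χ (-1, -1) : k) * ((etaHom F k χ x : kˣ) : k) := by
  rw [cc_units, etaHom_apply, ← Units.val_mul, ← _root_.map_mul]
  congr 2
  rw [Prod.mk_mul_mk, neg_one_mul, neg_one_mul]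

lemma sum_erase_units (g : F → k) :
    ∑ t ∈ Finset.univ.erase (0 : F), g t = ∑ x : Fˣ, g (x : F) := by
  rw [Finset.sum_subtype (p := fun x : F => x ≠ 0) (Finset.univ.erase (0:F))
    (fun x => by simp [Finset.mem_erase]) g]
  exact (Fintype.sum_equiv unitsEquivNeZero _ _ (fun x => rfl)).symm

lemma sum_eq_sum_units (g : F → k) (h0 : g 0 = 0) :
    ∑ t : F, g t = ∑ x : Fˣ, g (x : F) := by
  rw [← Finset.sum_erase Finset.univ h0, sum_erase_units]

lemma sum_cc (χ : (Fˣ × Fˣ) →* kˣ) (hχ : χ ≠ swapChar F k χ) :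
    ∑ t : F, cc F k χ t = 0 := by
  rw [sum_eq_sum_units F k _ (cc_zero F k χ)]
  calc ∑ x : Fˣ, cc F k χ (x : F)
      = ∑ x : Fˣ, (χ (-1, -1) : k) * ((etaHom F k χ x : kˣ) : k) := by
        exact Finset.sum_congr rfl fun x _ => cc_factor F k χ x
    _ = (χ (-1, -1) : k) * ∑ x : Fˣ, ((etaHom F k χ x : kˣ) : k) := by rw [Finset.mul_sum]
    _ = 0 := by rw [sum_etaHom F k χ hχ, mul_zero]

variable {F k}

lemma ind_b {χ : (Fˣ × Fˣ) →* kˣ} {f : GL2 F → k} (hf : f ∈ Ind F k χ) (a d : Fˣ) (c : F) :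
    f (bElt F a d c) = (χ (a, d) : k) * f 1 := by
  have := hf a d c 1; rwa [mul_one] at this

lemma heckeT_w (f : GL2 F → k) (x : GL2 F) :
    heckeT F k f x = ∑ lam : F, f (wElt F lam * x) := by
  simp only [heckeT, LinearMap.coe_mk, AddHom.coe_mk, K0]

lemma ind_ext {χ : (Fˣ × Fˣ) →* kˣ} {f f' : GL2 F → k} (hf : f ∈ Ind F k χ)
    (hf' : f' ∈ Ind F k χ) (h1 : f 1 = f' 1) (hw : ∀ μ, f (wElt F μ) = f' (wElt F μ)) :
    f = f' := by
  funext g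
  rcases bruhat F g with ⟨a, d, c, rfl⟩ | ⟨a, d, c, μ, rfl⟩
  · rw [ind_b hf, ind_b hf', h1]
  · rw [hf a d c _, hf' a d c _, hw μ]

lemma T_at_one (f : GL2 F → k) : heckeT F k f 1 = ∑ lam : F, f (wElt F lam) := by
  rw [heckeT_w]
  exact Finset.sum_congr rfl fun lam _ => by rw [mul_one]

lemma T_at_w {χ : (Fˣ × Fˣ) →* kˣ} {f : GL2 F → k} (hf : f ∈ Ind F k χ) (μ : F) :
    heckeT F k f (wElt F μ) =
      (χ (-1, -1) : k) * f 1 + ∑ t : F, cc F k χ t * f (wElt F (μ - t)) := by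
  rw [heckeT_w, ← Finset.add_sum_erase _ _ (Finset.mem_univ (0 : F))]
  congr 1
  · rw [K2, ind_b hf]
  · rw [sum_erase_units F k (fun lam => f (wElt F lam * wElt F μ)),
      sum_eq_sum_units F k _ (by rw [cc_zero, zero_mul])]
    rw [← Equiv.sum_comp (Equiv.inv Fˣ) (fun x => cc F k χ (x : F) * f (wElt F (μ - (x : F))))]
    apply Finset.sum_congr rfl
    intro x _
    have hx : ((x : F)) ≠ 0 := x.ne_zero
    rw [K3 F _ μ hx]
    have hmk : Units.mk0 (x : F) hx = x := Units.ext rfl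
    rw [hmk, hf _ _ _ _, cc_units]
    simp only [Equiv.inv_apply, inv_inv]
    rw [Units.val_inv_eq_inv_val]

lemma T_mem {χ : (Fˣ × Fˣ) →* kˣ} {f : GL2 F → k} (hf : f ∈ Ind F k χ) :
    heckeT F k f ∈ Ind F k (swapChar F k χ) := by
  intro a d c g
  rw [heckeT_w, heckeT_w, swapChar_apply, Finset.mul_sum]
  have ha : (a : F) ≠ 0 := a.ne_zero
  have hd : (d : F) ≠ 0 := d.ne_zero
  have hbij : Function.Bijective (fun lam : F => (c + lam * (d : F)) / (a : F)) := by
    apply Function.bijective_iff_has_inverse.mpr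
    refine ⟨fun y => (y * (a : F) - c) / (d : F), fun lam => by field_simp; ring, fun y => by field_simp; ring⟩
  have step : ∀ lam : F, f (wElt F lam * (bElt F a d c * g))
      = (χ (d, a) : k) * f (wElt F ((c + lam * (d : F)) / (a : F)) * g) := by
    intro lam
    rw [← mul_assoc, K1, mul_assoc, hf d a 0 _]
  rw [Finset.sum_congr rfl fun lam _ => step lam]
  exact Fintype.sum_bijective _ hbij _ _ (fun lam => rfl)

lemma TT_zero {χ : (Fˣ × Fˣ) →* kˣ} {f : GL2 F → k} (hχ : χ ≠ swapChar F k χ)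
    (hcard : ((Fintype.card F : ℕ) : k) = 0) (hf : f ∈ Ind F k χ) :
    heckeT F k (heckeT F k f) = 0 := by
  funext x
  rw [heckeT_w]
  have step : ∀ μ : F, heckeT F k f (wElt F μ * x) = ∑ lam : F, f (wElt F lam * wElt F μ * x) := by
    intro μ
    rw [heckeT_w]
    exact Finset.sum_congr rfl fun lam _ => by rw [mul_assoc]
  rw [Finset.sum_congr rfl fun μ _ => step μ, Finset.sum_comm,
    ← Finset.add_sum_erase _ _ (Finset.mem_univ (0 : F))]
  have part1 : ∑ μ : F, f (wElt F 0 * wElt F μ * x) = 0 := by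
    have : ∀ μ : F, f (wElt F 0 * wElt F μ * x) = (χ (-1, -1) : k) * f x := by
      intro μ; rw [K2, hf]
    rw [Finset.sum_congr rfl fun μ _ => this μ, Finset.sum_const, Finset.card_univ,
      nsmul_eq_mul, hcard, zero_mul]
  have part2 : ∑ lam ∈ Finset.univ.erase (0 : F), ∑ μ : F, f (wElt F lam * wElt F μ * x) = 0 := by
    rw [sum_erase_units F k (fun lam => ∑ μ : F, f (wElt F lam * wElt F μ * x))]
    have inner : ∀ y : Fˣ, ∑ μ : F, f (wElt F (y : F) * wElt F μ * x)
        = cc F k (swapChar F k χ) (y : F) * ∑ ν : F, f (wElt F ν * x) := by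
      intro y
      have hy : ((y : F)) ≠ 0 := y.ne_zero
      have hmk : Units.mk0 (y : F) hy = y := Units.ext rfl
      have : ∀ μ : F, f (wElt F (y : F) * wElt F μ * x)
          = (χ (-(y)⁻¹, -y) : k) * f (wElt F (μ - (y : F)⁻¹) * x) := by
        intro μ
        rw [K3 F _ μ hy, hmk, mul_assoc, hf]
      rw [Finset.sum_congr rfl fun μ _ => this μ, ← Finset.mul_sum]
      congr 1
      · rw [cc_units]; rfl
      · rw [← Equiv.sum_comp (Equiv.subRight ((y : F)⁻¹))
          (fun ν => f (wElt F ν * x))]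
        rfl
    rw [Finset.sum_congr rfl fun y _ => inner y, ← Finset.sum_mul,
      ← sum_eq_sum_units F k _ (cc_zero F k _)]
    have hχs : swapChar F k χ ≠ swapChar F k (swapChar F k χ) := by
      rw [swapChar_swapChar]; exact fun h => hχ h.symm
    rw [sum_cc F k _ hχs, zero_mul]
  rw [part1, part2, add_zero]
  rfl

/-! ## The group algebra of `(F, +)` -/

variable (F k)

instance raCoeFun {R M : Type} [Semiring R] : CoeFun (AddMonoidAlgebra R M) (fun _ => M → R) :=
  ⟨fun Φ => Φ.coeff⟩

def toRA (φ : F → k) : AddMonoidAlgebra k F :=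
  AddMonoidAlgebra.ofCoeff (Finsupp.equivFunOnFinite.symm φ)

lemma toRA_apply (φ : F → k) (x : F) : toRA F k φ x = φ x :=
  rfl

lemma mul_apply_full (Φ Ψ : AddMonoidAlgebra k F) (x : F) :
    (Φ * Ψ) x = ∑ t : F, Φ t * Ψ (x - t) := by
  rw [AddMonoidAlgebra.mul_apply]
  rw [Finsupp.sum_fintype _ _ (fun a₁ => by simp [Finsupp.sum])]
  apply Finset.sum_congr rfl
  intro a₁ _
  rw [Finsupp.sum_fintype _ _ (fun a₂ => by simp)]
  rw [Finset.sum_eq_single_of_mem (x - a₁) (Finset.mem_univ _)]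
  · rw [if_pos (add_sub_cancel a₁ x)]
  · intro b _ hb
    rw [if_neg]
    intro hcon
    exact hb (by rw [← hcon]; ring)

def oneF : AddMonoidAlgebra k F := toRA F k (fun _ => 1)

def uu : AddMonoidAlgebra k F := AddMonoidAlgebra.single (1 : F) (1 : k)

def vv : AddMonoidAlgebra k F := uu F k - 1

lemma oneF_apply (x : F) : oneF F k x = 1 := toRA_apply F k _ x

lemma oneF_ne : oneF F k ≠ 0 := by
  intro h
  have := congrArg (fun Φ : AddMonoidAlgebra k F => Φ 0) h
  simp only [oneF_apply] at this
  simp at this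

lemma smul_oneF_inj {γ₁ γ₂ : k} (h : γ₁ • oneF F k = γ₂ • oneF F k) : γ₁ = γ₂ := by
  have h0 : (γ₁ - γ₂) • oneF F k = 0 := by rw [sub_smul, h, sub_self]
  rcases smul_eq_zero.mp h0 with h' | h'
  · exact sub_eq_zero.mp h'
  · exact absurd h' (oneF_ne F k)

lemma mul_oneF_left (Ψ : AddMonoidAlgebra k F) :
    oneF F k * Ψ = (∑ t : F, Ψ t) • oneF F k := by
  apply AddMonoidAlgebra.ext; apply Finsupp.ext
  intro x
  rw [mul_apply_full, AddMonoidAlgebra.coeff_smul_apply, oneF_apply, smul_eq_mul, mul_one]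
  calc ∑ t : F, oneF F k t * Ψ (x - t) = ∑ t : F, Ψ (x - t) := by
        apply Finset.sum_congr rfl; intro t _; rw [oneF_apply, one_mul]
    _ = ∑ t : F, Ψ t := Fintype.sum_equiv (Equiv.subLeft x) _ _ (fun t => rfl)

lemma uu_mul_oneF : uu F k * oneF F k = oneF F k := by
  apply AddMonoidAlgebra.ext; apply Finsupp.ext
  intro x
  rw [mul_apply_full, oneF_apply]
  rw [Finset.sum_eq_single_of_mem (1 : F) (Finset.mem_univ _)]
  · rw [uu, AddMonoidAlgebra.coeff_single, Finsupp.single_apply, if_pos rfl, oneF_apply, one_mul]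
  · intro b _ hb
    rw [uu, AddMonoidAlgebra.coeff_single, Finsupp.single_apply, if_neg (fun h => hb h.symm), zero_mul]

lemma vv_mul_oneF : vv F k * oneF F k = 0 := by
  rw [vv, sub_mul, one_mul, uu_mul_oneF, sub_self]

lemma charRA (p : ℕ) [CharP k p] : CharP (AddMonoidAlgebra k F) p := by
  have hinj : Function.Injective (algebraMap k (AddMonoidAlgebra k F)) := by
    intro a b h
    rw [AddMonoidAlgebra.coe_algebraMap] at h
    simpa using AddMonoidAlgebra.single_right_injective (m := (0 : F)) h
  exact charP_of_injective_algebraMap hinj p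

lemma uu_pow (m : ℕ) : uu F k ^ m = AddMonoidAlgebra.single ((m : F)) (1 : k) := by
  rw [uu, AddMonoidAlgebra.single_pow, one_pow, nsmul_eq_mul, mul_one]

lemma uu_pow_p (p : ℕ) [CharP F p] : uu F k ^ p = 1 := by
  rw [uu_pow, CharP.cast_eq_zero F p, AddMonoidAlgebra.one_def]

lemma vv_pow_p (p : ℕ) [Fact p.Prime] [CharP k p] [CharP F p] : vv F k ^ p = 0 := by
  have := charRA F k p
  rw [vv, sub_pow_char, uu_pow_p, one_pow, sub_self]

lemma exists_nat_cast (p : ℕ) [Fact p.Prime] [CharP F p] (hF : Fintype.card F = p) (t : F) :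
    ∃ m : ℕ, (m : F) = t := by
  have hbij : Function.Bijective (ZMod.castHom (dvd_refl p) F) := by
    rw [Fintype.bijective_iff_injective_and_card]
    exact ⟨(ZMod.castHom (dvd_refl p) F).injective, by rw [ZMod.card, hF]⟩
  obtain ⟨z, hz⟩ := hbij.surjective t
  refine ⟨z.val, ?_⟩
  rw [← hz, ← map_natCast (ZMod.castHom (dvd_refl p) F) z.val, ZMod.natCast_val, ZMod.cast_id]

lemma aeval_surj (p : ℕ) [Fact p.Prime] [CharP F p] (hF : Fintype.card F = p)
    (x : AddMonoidAlgebra k F) : ∃ P : Polynomial k, Polynomial.aeval (vv F k) P = x := by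
  induction x using AddMonoidAlgebra.induction_linear with
  | zero => exact ⟨0, _root_.map_zero _⟩
  | add f g hf hg =>
    obtain ⟨P, hP⟩ := hf; obtain ⟨Q, hQ⟩ := hg
    exact ⟨P + Q, by rw [_root_.map_add, hP, hQ]⟩
  | single a b =>
    obtain ⟨m, hm⟩ := exists_nat_cast F p hF a
    refine ⟨Polynomial.C b * (Polynomial.X + 1) ^ m, ?_⟩
    rw [_root_.map_mul, Polynomial.aeval_C, _root_.map_pow, _root_.map_add, Polynomial.aeval_X,
      _root_.map_one]
    rw [show vv F k + 1 = uu F k from by rw [vv, sub_add_cancel]]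
    rw [uu_pow, hm]
    simp only [AddMonoidAlgebra.coe_algebraMap, Function.comp_apply]
    rw [AddMonoidAlgebra.single_mul_single, zero_add, mul_one]
    simp

lemma chain (p : ℕ) [Fact p.Prime] [CharP F p] [CharP k p] (hF : Fintype.card F = p)
    (x : AddMonoidAlgebra k F) (hx : x ≠ 0) :
    ∃ (e : ℕ) (w : AddMonoidAlgebra k F), IsUnit w ∧ x = vv F k ^ e * w := by
  obtain ⟨P, hP⟩ := aeval_surj F k p hF x
  have hP0 : P ≠ 0 := fun h => hx (by rw [← hP, h, _root_.map_zero])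
  obtain ⟨Q, hQ, hndvd⟩ := P.exists_eq_pow_rootMultiplicity_mul_and_not_dvd hP0 0
  rw [Polynomial.C_0, sub_zero] at hQ hndvd
  refine ⟨P.rootMultiplicity 0, Polynomial.aeval (vv F k) Q, ?_, ?_⟩
  · have hc : Q.coeff 0 ≠ 0 := fun h => hndvd (Polynomial.X_dvd_iff.mpr h)
    have hqd : Polynomial.aeval (vv F k) Q
        = algebraMap k (AddMonoidAlgebra k F) (Q.coeff 0)
          + vv F k * Polynomial.aeval (vv F k) Q.divX := by
      conv_lhs => rw [← Polynomial.X_mul_divX_add Q]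
      rw [_root_.map_add, _root_.map_mul, Polynomial.aeval_X, Polynomial.aeval_C, add_comm]
    rw [hqd]
    apply IsNilpotent.isUnit_add_left_of_commute
    · exact ⟨p, by rw [mul_pow, vv_pow_p, zero_mul]⟩
    · exact (isUnit_iff_ne_zero.mpr hc).map (algebraMap k (AddMonoidAlgebra k F))
    · exact Commute.all _ _
  · rw [← hP]
    conv_lhs => rw [hQ]
    rw [_root_.map_mul, _root_.map_pow, Polynomial.aeval_X]

lemma keyLemma (p : ℕ) [Fact p.Prime] [CharP F p] [CharP k p] (hF : Fintype.card F = p)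
    (c c' Φ : AddMonoidAlgebra k F) (γ γ' : k) (hγ : γ ≠ 0)
    (h1 : c * c' = γ • oneF F k) (h2 : c' * Φ = γ' • oneF F k) :
    ∃ Ψ : AddMonoidAlgebra k F, c * Ψ = Φ := by
  by_cases hΦ : Φ = 0
  · exact ⟨0, by rw [mul_zero, hΦ]⟩
  have hcc' : c * c' ≠ 0 := by rw [h1]; exact smul_ne_zero hγ (oneF_ne F k)
  have hc : c ≠ 0 := left_ne_zero_of_mul hcc'
  have hc' : c' ≠ 0 := right_ne_zero_of_mul hcc'
  obtain ⟨a, w1, hw1, hcd⟩ := chain F k p hF c hc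
  obtain ⟨b, w2, hw2, hcd'⟩ := chain F k p hF c' hc'
  obtain ⟨e, w3, hw3, hΦd⟩ := chain F k p hF Φ hΦ
  rcases le_or_gt a e with h | h
  · refine ⟨(↑hw1.unit⁻¹ : AddMonoidAlgebra k F) * (vv F k ^ (e - a) * w3), ?_⟩
    have hinv : w1 * (↑hw1.unit⁻¹ : AddMonoidAlgebra k F) = 1 := IsUnit.mul_val_inv hw1
    have h3 : vv F k ^ a * vv F k ^ (e - a) = vv F k ^ e := by
      rw [← pow_add, Nat.add_sub_cancel' h]
    calc c * ((↑hw1.unit⁻¹ : AddMonoidAlgebra k F) * (vv F k ^ (e - a) * w3))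
        = (vv F k ^ a * vv F k ^ (e - a)) * ((w1 * ↑hw1.unit⁻¹) * w3) := by rw [hcd]; ring
      _ = Φ := by rw [hinv, h3, one_mul, hΦd]
  · exfalso
    have hv1 : vv F k * (c' * Φ) = 0 := by
      rw [h2, mul_smul_comm, vv_mul_oneF, smul_zero]
    have hexp : c' * Φ = vv F k ^ (b + e) * (w2 * w3) := by
      rw [hcd', hΦd, pow_add]; ring
    have h0 : vv F k ^ (b + e + 1) * (w2 * w3) = 0 := by
      rw [show vv F k ^ (b+e+1) * (w2*w3) = vv F k * (vv F k ^ (b+e) * (w2*w3)) from by ring,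
        ← hexp, hv1]
    have hz : vv F k ^ (b + e + 1) = 0 := by
      have hu : IsUnit (w2 * w3) := hw2.mul hw3
      exact (hu.mul_left_eq_zero).mp h0
    have hab : vv F k ^ (a + b) * (w1 * w2) ≠ 0 := by
      rw [show vv F k ^ (a+b) * (w1*w2) = (vv F k ^ a * w1) * (vv F k ^ b * w2) from by
        rw [pow_add]; ring, ← hcd, ← hcd', h1]
      exact smul_ne_zero hγ (oneF_ne F k)
    apply hab
    rw [show a + b = (b + e + 1) + (a + b - (b + e + 1)) from by omega, pow_add, hz,
      zero_mul, zero_mul]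

/-! ## The convolution identity `c_χ * c_{χ^s} = -χ(-1,-1) · 1` -/

def ccEta (χ : (Fˣ × Fˣ) →* kˣ) : F → k := fun z =>
  if h : z = 0 then 0 else ((etaHom F k χ (Units.mk0 z h) : kˣ) : k)

variable {F k}

lemma ccEta_zero (χ : (Fˣ × Fˣ) →* kˣ) : ccEta F k χ 0 = 0 := by simp [ccEta]

lemma ccEta_units (χ : (Fˣ × Fˣ) →* kˣ) (x : Fˣ) :
    ccEta F k χ (x : F) = ((etaHom F k χ x : kˣ) : k) := by
  have hmk : Units.mk0 (x : F) x.ne_zero = x := Units.ext rfl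
  rw [ccEta, dif_neg x.ne_zero, hmk]

lemma ccEta_neg_one (χ : (Fˣ × Fˣ) →* kˣ) : ccEta F k χ (-1 : F) = (χ (-1, -1) : k) := by
  have h1 : ((-1 : Fˣ) : F) = (-1 : F) := by simp
  rw [← h1, ccEta_units, etaHom_apply]
  norm_num

lemma term_eq_ccEta (χ : (Fˣ × Fˣ) →* kˣ) (r t : F) (ht : t ≠ 0) (hrt : r - t ≠ 0) :
    cc F k χ t * cc F k (swapChar F k χ) (r - t) = ccEta F k χ (t / (r - t)) := by
  have hq : t / (r - t) ≠ 0 := div_ne_zero ht hrt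
  rw [cc, dif_neg ht, cc, dif_neg hrt, ccEta, dif_neg hq, etaHom_apply, swapChar_apply]
  rw [← Units.val_mul, ← _root_.map_mul]
  congr 2
  rw [Prod.mk_mul_mk]
  have hW : Units.mk0 (t / (r - t)) hq = Units.mk0 t ht * (Units.mk0 (r - t) hrt)⁻¹ :=
    Units.ext (by rw [Units.val_mul, Units.val_inv_eq_inv_val, Units.val_mk0, Units.val_mk0,
      Units.val_mk0, div_eq_mul_inv])
  rw [neg_mul_neg, neg_mul_neg, hW, mul_inv, inv_inv, mul_comm ((Units.mk0 t ht)⁻¹)]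

lemma conv_cc (χ : (Fˣ × Fˣ) →* kˣ) (hχ : χ ≠ swapChar F k χ)
    (hcard : ((Fintype.card F : ℕ) : k) = 0) (r : F) :
    ∑ t : F, cc F k χ t * cc F k (swapChar F k χ) (r - t) = -(χ (-1, -1) : k) := by
  by_cases hr : r = 0
  · subst hr
    have hterm : ∀ x : Fˣ, cc F k χ ((x : F)) * cc F k (swapChar F k χ) (0 - (x : F))
        = (χ (-1, -1) : k) := by
      intro x
      rw [term_eq_ccEta χ 0 _ x.ne_zero (by simpa using x.ne_zero)]
      rw [show (0 : F) - (x : F) = -(x : F) from by ring, div_neg, div_self x.ne_zero,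
        ccEta_neg_one]
    rw [sum_eq_sum_units F k _ (by rw [cc_zero, zero_mul])]
    rw [Finset.sum_congr rfl fun x _ => hterm x, Finset.sum_const, Finset.card_univ,
      Fintype.card_units, nsmul_eq_mul]
    have : ((Fintype.card F - 1 : ℕ) : k) = -1 := by
      rw [Nat.cast_sub Fintype.card_pos, hcard, Nat.cast_one, zero_sub]
    rw [this, neg_one_mul]
  · -- r ≠ 0
    have step1 : ∑ t : F, cc F k χ t * cc F k (swapChar F k χ) (r - t)
        = ∑ t ∈ (Finset.univ.erase (0:F)).erase r, cc F k χ t * cc F k (swapChar F k χ) (r - t) := by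
      symm
      apply Finset.sum_subset (Finset.subset_univ _)
      intro t _ hnt
      simp only [Finset.mem_erase, Finset.mem_univ, and_true] at hnt
      rcases not_and_or.mp hnt with h | h
      · push_neg at h; subst h
        rw [sub_self, cc_zero, mul_zero]
      · push_neg at h; subst h
        rw [cc_zero, zero_mul]
    rw [step1]
    have step2 : ∑ t ∈ (Finset.univ.erase (0:F)).erase r,
          cc F k χ t * cc F k (swapChar F k χ) (r - t)
        = ∑ z ∈ (Finset.univ.erase (0:F)).erase (-1 : F), ccEta F k χ z := by
      apply Finset.sum_nbij' (i := fun t => t / (r - t)) (j := fun z => r * z / (1 + z))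
      · intro t ht
        simp only [Finset.mem_erase, Finset.mem_univ, and_true] at ht ⊢
        obtain ⟨htr, ht0⟩ := ht
        have hrt : r - t ≠ 0 := sub_ne_zero.mpr (fun h => htr h.symm)
        constructor
        · intro hcon
          rw [div_eq_iff hrt] at hcon
          exact hr (by linear_combination hcon)
        · exact div_ne_zero ht0 hrt
      · intro z hz
        simp only [Finset.mem_erase, Finset.mem_univ, and_true] at hz ⊢
        obtain ⟨hz1, hz0⟩ := hz
        have h1z : 1 + z ≠ 0 := fun h => hz1 (by linear_combination h)
        constructor
        · intro hcon
          rw [div_eq_iff h1z] at hcon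
          exact hr (by linear_combination -hcon)
        · exact div_ne_zero (mul_ne_zero hr hz0) h1z
      · intro t ht
        simp only [Finset.mem_erase, Finset.mem_univ, and_true] at ht
        obtain ⟨htr, ht0⟩ := ht
        have hrt : r - t ≠ 0 := sub_ne_zero.mpr (fun h => htr h.symm)
        field_simp
        rw [sub_add_cancel, div_self hr]
      · intro z hz
        simp only [Finset.mem_erase, Finset.mem_univ, and_true] at hz
        obtain ⟨hz1, hz0⟩ := hz
        have h1z : 1 + z ≠ 0 := fun h => hz1 (by linear_combination h)
        field_simp
        ring
      · intro t ht
        simp only [Finset.mem_erase, Finset.mem_univ, and_true] at ht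
        obtain ⟨htr, ht0⟩ := ht
        have hrt : r - t ≠ 0 := sub_ne_zero.mpr (fun h => htr h.symm)
        exact term_eq_ccEta χ r t ht0 hrt
    rw [step2]
    have hm1 : (-1 : F) ∈ Finset.univ.erase (0 : F) := by
      simp only [Finset.mem_erase, Finset.mem_univ, and_true]
      exact neg_ne_zero.mpr one_ne_zero
    have step3 := Finset.add_sum_erase _ (ccEta F k χ) hm1
    have step4 : ∑ z ∈ Finset.univ.erase (0:F), ccEta F k χ z = 0 := by
      rw [sum_erase_units F k (ccEta F k χ)]
      calc ∑ x : Fˣ, ccEta F k χ ((x : F)) = ∑ x : Fˣ, ((etaHom F k χ x : kˣ) : k) :=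
            Finset.sum_congr rfl fun x _ => ccEta_units χ x
        _ = 0 := sum_etaHom F k χ hχ
    rw [ccEta_neg_one] at step3
    linear_combination step3 + step4

/-! ## The algebra form of the convolution identity -/

lemma F1 (χ : (Fˣ × Fˣ) →* kˣ) (hχ : χ ≠ swapChar F k χ)
    (hcard : ((Fintype.card F : ℕ) : k) = 0) :
    toRA F k (cc F k χ) * toRA F k (cc F k (swapChar F k χ))
      = (-(χ (-1, -1) : k)) • oneF F k := by
  apply AddMonoidAlgebra.ext; apply Finsupp.ext
  intro x
  rw [mul_apply_full, AddMonoidAlgebra.coeff_smul_apply, oneF_apply, smul_eq_mul, mul_one]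
  calc ∑ t : F, toRA F k (cc F k χ) t * toRA F k (cc F k (swapChar F k χ)) (x - t)
      = ∑ t : F, cc F k χ t * cc F k (swapChar F k χ) (x - t) := by
        apply Finset.sum_congr rfl; intro t _; rw [toRA_apply, toRA_apply]
    _ = -(χ (-1, -1) : k) := conv_cc χ hχ hcard x

/-! ## Constructing elements of `Ind` from coordinates -/

def mk0' (x : F) : Fˣ := if h : x = 0 then 1 else Units.mk0 x h

lemma mk0'_val {x : F} (h : x ≠ 0) : ((mk0' x : Fˣ) : F) = x := by
  rw [mk0', dif_neg h, Units.val_mk0]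

lemma mk0'_one : mk0' (1 : F) = 1 := Units.ext (by rw [mk0'_val one_ne_zero, Units.val_one])

def mkI (χ : (Fˣ × Fˣ) →* kˣ) (f₀ : k) (φ : F → k) : GL2 F → k := fun g =>
  if (g : Matrix (Fin 2) (Fin 2) F) 1 0 = 0 then
    (χ (mk0' ((g : Matrix (Fin 2) (Fin 2) F) 0 0),
        mk0' ((g : Matrix (Fin 2) (Fin 2) F) 1 1)) : k) * f₀
  else
    (χ (mk0' (-(g : Matrix (Fin 2) (Fin 2) F).det / (g : Matrix (Fin 2) (Fin 2) F) 1 0),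
        mk0' (-((g : Matrix (Fin 2) (Fin 2) F) 1 0))) : k)
      * φ ((g : Matrix (Fin 2) (Fin 2) F) 1 1 / (g : Matrix (Fin 2) (Fin 2) F) 1 0)

lemma mkI_one (χ : (Fˣ × Fˣ) →* kˣ) (f₀ : k) (φ : F → k) : mkI χ f₀ φ 1 = f₀ := by
  have h : ((1 : GL2 F) : Matrix (Fin 2) (Fin 2) F) 1 0 = 0 := by
    rw [Units.val_one, Matrix.one_apply_ne]; decide
  have h00 : ((1 : GL2 F) : Matrix (Fin 2) (Fin 2) F) 0 0 = 1 := by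
    rw [Units.val_one, Matrix.one_apply_eq]
  have h11 : ((1 : GL2 F) : Matrix (Fin 2) (Fin 2) F) 1 1 = 1 := by
    rw [Units.val_one, Matrix.one_apply_eq]
  rw [mkI, if_pos h, h00, h11, mk0'_one]
  rw [show ((1 : Fˣ), (1 : Fˣ)) = (1 : Fˣ × Fˣ) from rfl, _root_.map_one, Units.val_one, one_mul]

lemma mkI_w (χ : (Fˣ × Fˣ) →* kˣ) (f₀ : k) (φ : F → k) (μ : F) :
    mkI χ f₀ φ (wElt F μ) = φ μ := by
  have e10 : ((wElt F μ : GL2 F) : Matrix (Fin 2) (Fin 2) F) 1 0 = -1 := by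
    rw [coe_wElt]; norm_num
  have e11 : ((wElt F μ : GL2 F) : Matrix (Fin 2) (Fin 2) F) 1 1 = -μ := by
    rw [coe_wElt]; norm_num
  have edet : ((wElt F μ : GL2 F) : Matrix (Fin 2) (Fin 2) F).det = 1 := by
    rw [coe_wElt, Matrix.det_fin_two_of]; ring
  rw [mkI, if_neg (by rw [e10]; exact fun h => one_ne_zero (neg_eq_zero.mp h)), e10, e11, edet]
  rw [show -(1:F) / -1 = 1 from by norm_num, show (-μ : F) / -1 = μ from by
    rw [neg_div_neg_eq, div_one], show -(-1 : F) = 1 from by norm_num, mk0'_one]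
  rw [show ((1 : Fˣ), (1 : Fˣ)) = (1 : Fˣ × Fˣ) from rfl, _root_.map_one, Units.val_one, one_mul]

lemma upper00_ne {g : GL2 F} (h : (g : Matrix (Fin 2) (Fin 2) F) 1 0 = 0) :
    (g : Matrix (Fin 2) (Fin 2) F) 0 0 ≠ 0 := by
  intro h0
  apply det_ne F g
  rw [Matrix.det_fin_two, h, h0]; ring

lemma upper11_ne {g : GL2 F} (h : (g : Matrix (Fin 2) (Fin 2) F) 1 0 = 0) :
    (g : Matrix (Fin 2) (Fin 2) F) 1 1 ≠ 0 := by
  intro h0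
  apply det_ne F g
  rw [Matrix.det_fin_two, h, h0]; ring

lemma mkI_apply_pos (χ : (Fˣ × Fˣ) →* kˣ) (f₀ : k) (φ : F → k) {g : GL2 F} {x y : F}
    (h : (g : Matrix (Fin 2) (Fin 2) F) 1 0 = 0)
    (hx : (g : Matrix (Fin 2) (Fin 2) F) 0 0 = x)
    (hy : (g : Matrix (Fin 2) (Fin 2) F) 1 1 = y) :
    mkI χ f₀ φ g = (χ (mk0' x, mk0' y) : k) * f₀ := by
  unfold mkI
  rw [if_pos h, hx, hy]

lemma mkI_apply_neg (χ : (Fˣ × Fˣ) →* kˣ) (f₀ : k) (φ : F → k) {g : GL2 F} {x y z : F}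
    (h : ¬ (g : Matrix (Fin 2) (Fin 2) F) 1 0 = 0)
    (hx : -(g : Matrix (Fin 2) (Fin 2) F).det / (g : Matrix (Fin 2) (Fin 2) F) 1 0 = x)
    (hy : -((g : Matrix (Fin 2) (Fin 2) F) 1 0) = y)
    (hz : (g : Matrix (Fin 2) (Fin 2) F) 1 1 / (g : Matrix (Fin 2) (Fin 2) F) 1 0 = z) :
    mkI χ f₀ φ g = (χ (mk0' x, mk0' y) : k) * φ z := by
  unfold mkI
  rw [if_neg h, hx, hy, hz]

lemma mkI_mem (χ : (Fˣ × Fˣ) →* kˣ) (f₀ : k) (φ : F → k) : mkI χ f₀ φ ∈ Ind F k χ := by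
  intro a d c g
  have hco : ((bElt F a d c * g : GL2 F) : Matrix (Fin 2) (Fin 2) F)
      = !![(a : F), c; 0, (d : F)] * (g : Matrix (Fin 2) (Fin 2) F) := by
    rw [Units.val_mul, coe_bElt]
  have h10 : ((bElt F a d c * g : GL2 F) : Matrix (Fin 2) (Fin 2) F) 1 0
      = (d : F) * (g : Matrix (Fin 2) (Fin 2) F) 1 0 := by
    rw [hco, Matrix.mul_apply, Fin.sum_univ_two]; norm_num
  have h00 : ((bElt F a d c * g : GL2 F) : Matrix (Fin 2) (Fin 2) F) 0 0
      = (a : F) * (g : Matrix (Fin 2) (Fin 2) F) 0 0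
        + c * (g : Matrix (Fin 2) (Fin 2) F) 1 0 := by
    rw [hco, Matrix.mul_apply, Fin.sum_univ_two]; norm_num
  have h11 : ((bElt F a d c * g : GL2 F) : Matrix (Fin 2) (Fin 2) F) 1 1
      = (d : F) * (g : Matrix (Fin 2) (Fin 2) F) 1 1 := by
    rw [hco, Matrix.mul_apply, Fin.sum_univ_two]; norm_num
  have hdet : ((bElt F a d c * g : GL2 F) : Matrix (Fin 2) (Fin 2) F).det
      = ((a : F) * (d : F)) * (g : Matrix (Fin 2) (Fin 2) F).det := by
    rw [hco, Matrix.det_mul, Matrix.det_fin_two_of]; ring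
  by_cases hg : (g : Matrix (Fin 2) (Fin 2) F) 1 0 = 0
  · have hbg : ((bElt F a d c * g : GL2 F) : Matrix (Fin 2) (Fin 2) F) 1 0 = 0 := by
      rw [h10, hg, mul_zero]
    have e00 : ((bElt F a d c * g : GL2 F) : Matrix (Fin 2) (Fin 2) F) 0 0
        = (a : F) * (g : Matrix (Fin 2) (Fin 2) F) 0 0 := by rw [h00, hg, mul_zero, add_zero]
    rw [mkI_apply_pos χ f₀ φ hbg e00 h11, mkI_apply_pos χ f₀ φ hg rfl rfl]
    have u1 : mk0' ((a : F) * (g : Matrix (Fin 2) (Fin 2) F) 0 0)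
        = a * mk0' ((g : Matrix (Fin 2) (Fin 2) F) 0 0) := by
      apply Units.ext
      rw [mk0'_val (mul_ne_zero a.ne_zero (upper00_ne hg)), Units.val_mul,
        mk0'_val (upper00_ne hg)]
    have u2 : mk0' ((d : F) * (g : Matrix (Fin 2) (Fin 2) F) 1 1)
        = d * mk0' ((g : Matrix (Fin 2) (Fin 2) F) 1 1) := by
      apply Units.ext
      rw [mk0'_val (mul_ne_zero d.ne_zero (upper11_ne hg)), Units.val_mul,
        mk0'_val (upper11_ne hg)]
    rw [u1, u2, show (a * mk0' ((g : Matrix (Fin 2) (Fin 2) F) 0 0),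
        d * mk0' ((g : Matrix (Fin 2) (Fin 2) F) 1 1))
        = (a, d) * (mk0' ((g : Matrix (Fin 2) (Fin 2) F) 0 0),
            mk0' ((g : Matrix (Fin 2) (Fin 2) F) 1 1)) from rfl,
      _root_.map_mul, Units.val_mul, mul_assoc]
  · have hbg : ¬ ((bElt F a d c * g : GL2 F) : Matrix (Fin 2) (Fin 2) F) 1 0 = 0 := by
      rw [h10]; exact mul_ne_zero d.ne_zero hg
    have hne2 : -(g : Matrix (Fin 2) (Fin 2) F).det / (g : Matrix (Fin 2) (Fin 2) F) 1 0 ≠ 0 :=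
      div_ne_zero (neg_ne_zero.mpr (det_ne F g)) hg
    have hdet' : -((bElt F a d c * g : GL2 F) : Matrix (Fin 2) (Fin 2) F).det
          / ((bElt F a d c * g : GL2 F) : Matrix (Fin 2) (Fin 2) F) 1 0
        = (a : F) * (-(g : Matrix (Fin 2) (Fin 2) F).det / (g : Matrix (Fin 2) (Fin 2) F) 1 0) := by
      rw [hdet, h10]
      field_simp
    have hneg : -(((bElt F a d c * g : GL2 F) : Matrix (Fin 2) (Fin 2) F) 1 0)
        = (d : F) * (-((g : Matrix (Fin 2) (Fin 2) F) 1 0)) := by rw [h10]; ring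
    have harg : ((bElt F a d c * g : GL2 F) : Matrix (Fin 2) (Fin 2) F) 1 1
          / ((bElt F a d c * g : GL2 F) : Matrix (Fin 2) (Fin 2) F) 1 0
        = (g : Matrix (Fin 2) (Fin 2) F) 1 1 / (g : Matrix (Fin 2) (Fin 2) F) 1 0 := by
      rw [h11, h10, mul_div_mul_left _ _ d.ne_zero]
    rw [mkI_apply_neg χ f₀ φ hbg hdet' hneg harg, mkI_apply_neg χ f₀ φ hg rfl rfl rfl]
    have u1 : mk0' ((a : F)
          * (-(g : Matrix (Fin 2) (Fin 2) F).det / (g : Matrix (Fin 2) (Fin 2) F) 1 0))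
        = a * mk0' (-(g : Matrix (Fin 2) (Fin 2) F).det / (g : Matrix (Fin 2) (Fin 2) F) 1 0) := by
      apply Units.ext
      rw [mk0'_val (mul_ne_zero a.ne_zero hne2), Units.val_mul, mk0'_val hne2]
    have u2 : mk0' ((d : F) * (-((g : Matrix (Fin 2) (Fin 2) F) 1 0)))
        = d * mk0' (-((g : Matrix (Fin 2) (Fin 2) F) 1 0)) := by
      apply Units.ext
      rw [mk0'_val (mul_ne_zero d.ne_zero (neg_ne_zero.mpr hg)), Units.val_mul,
        mk0'_val (neg_ne_zero.mpr hg)]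
    rw [u1, u2, show (a * mk0' (-(g : Matrix (Fin 2) (Fin 2) F).det
            / (g : Matrix (Fin 2) (Fin 2) F) 1 0),
        d * mk0' (-((g : Matrix (Fin 2) (Fin 2) F) 1 0)))
        = (a, d) * (mk0' (-(g : Matrix (Fin 2) (Fin 2) F).det / (g : Matrix (Fin 2) (Fin 2) F) 1 0),
            mk0' (-((g : Matrix (Fin 2) (Fin 2) F) 1 0))) from rfl,
      _root_.map_mul, Units.val_mul, mul_assoc]


/-- assume `q = p` and `χ ≠ χ^s`.  Then the kernel of
`T_{n_s} : Ind_B^Γ χ^s → Ind_B^Γ χ` equals the image of `T_{n_s} : Ind_B^Γ χ → Ind_B^Γ χ^s`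
(which expresses the exactness of the sequence
`0 → Im T_{n_s} → Ind_B^Γ χ^s → Im T_{n_s} → 0`). -/
theorem stmt_5 (p : ℕ) [Fact p.Prime] (hF : Fintype.card F = p)
    [IsAlgClosed k] [CharP k p]
    (χ : (Fˣ × Fˣ) →* kˣ) (hχ : χ ≠ swapChar F k χ) :
    Ind F k (swapChar F k χ) ⊓ LinearMap.ker (heckeT F k) =
      Submodule.map (heckeT F k) (Ind F k χ) := by
  haveI : CharP F p := charP_of_card_eq_prime hF
  have hcard : ((Fintype.card F : ℕ) : k) = 0 := by rw [hF]; exact CharP.cast_eq_zero k p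
  apply le_antisymm
  · rintro f hf
    obtain ⟨hfInd, hfker⟩ := Submodule.mem_inf.mp hf
    have hT0 : heckeT F k f = 0 := LinearMap.mem_ker.mp hfker
    have hγ : -((χ (-1, -1) : kˣ) : k) ≠ 0 := neg_ne_zero.mpr (Units.ne_zero _)
    have hswap : ((swapChar F k χ (-1, -1) : kˣ) : k) = ((χ (-1, -1) : kˣ) : k) := rfl
    -- the coordinate function of f
    have h2 : toRA F k (cc F k (swapChar F k χ)) * toRA F k (fun μ => f (wElt F μ))
        = (-((χ (-1, -1) : kˣ) : k) * f 1) • oneF F k := by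
      apply AddMonoidAlgebra.ext; apply Finsupp.ext
      intro x
      rw [mul_apply_full, AddMonoidAlgebra.coeff_smul_apply, oneF_apply, smul_eq_mul, mul_one]
      have hTw : heckeT F k f (wElt F x) = 0 := by rw [hT0]; rfl
      rw [T_at_w hfInd x, hswap] at hTw
      calc ∑ t : F, toRA F k (cc F k (swapChar F k χ)) t
            * toRA F k (fun μ => f (wElt F μ)) (x - t)
          = ∑ t : F, cc F k (swapChar F k χ) t * f (wElt F (x - t)) := by
            apply Finset.sum_congr rfl; intro t _; rw [toRA_apply, toRA_apply]
        _ = -((χ (-1, -1) : kˣ) : k) * f 1 := by linear_combination hTw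
    have h1 := F1 χ hχ hcard
    obtain ⟨Ψ, hΨ⟩ := keyLemma F k p hF _ _ _ _ _ hγ h1 h2
    -- consistency: the sum of Ψ equals f 1
    have e1 : (toRA F k (cc F k χ) * toRA F k (cc F k (swapChar F k χ))) * Ψ
        = (-((χ (-1, -1) : kˣ) : k) * f 1) • oneF F k := by
      rw [show (toRA F k (cc F k χ) * toRA F k (cc F k (swapChar F k χ))) * Ψ
          = toRA F k (cc F k (swapChar F k χ)) * (toRA F k (cc F k χ) * Ψ) from by ring,
        hΨ, h2]
    rw [h1, smul_mul_assoc, mul_oneF_left, smul_smul] at e1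
    have hsum : ∑ t : F, Ψ t = f 1 := mul_left_cancel₀ hγ (smul_oneF_inj F k e1)
    refine Submodule.mem_map.mpr ⟨mkI χ 0 (fun t => Ψ t), mkI_mem χ 0 _, ?_⟩
    apply ind_ext (T_mem (mkI_mem χ 0 _)) hfInd
    · rw [T_at_one]
      calc ∑ lam : F, mkI χ 0 (fun t => Ψ t) (wElt F lam) = ∑ lam : F, Ψ lam :=
            Finset.sum_congr rfl fun lam _ => mkI_w χ 0 _ lam
        _ = f 1 := hsum
    · intro μ
      rw [T_at_w (mkI_mem χ 0 _) μ, mkI_one, mul_zero, zero_add]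
      have hconv := congrArg (fun Φ : AddMonoidAlgebra k F => Φ μ) hΨ
      rw [mul_apply_full, toRA_apply] at hconv
      calc ∑ t : F, cc F k χ t * mkI χ 0 (fun t => Ψ t) (wElt F (μ - t))
          = ∑ t : F, cc F k χ t * Ψ (μ - t) := by
            apply Finset.sum_congr rfl; intro t _; rw [mkI_w]
        _ = f (wElt F μ) := by
            rw [← hconv]
            apply Finset.sum_congr rfl; intro t _; rw [toRA_apply]
  · rintro f' hf'
    obtain ⟨g, hgInd, rfl⟩ := Submodule.mem_map.mp hf'
    exact Submodule.mem_inf.mpr ⟨T_mem hgInd, LinearMap.mem_ker.mpr (TT_zero hχ hcard hgInd)⟩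

end
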